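/- Let Ω be a probability space, W̄ : Ω × ℝ^{m×d} → [0,∞) jointly measurable, convex in the second variable a.s., with E[sup_{|η|≤r} W̄(·,η)] < ∞ and E[sup_{|η|≤r} W̄*(·,η)] < ∞ for all r > 0. Let H ⊂ L¹(Ω)^{m×d} be the (weakly closed) space of potential fields with mean zero, and define W_hom(ξ) := inf_{h ∈ H} E[W̄(·, ξ + h)]. Then W_hom is a finite convex function on ℝ^{m×d} which is superlinear at infinity: W_hom(ξ)/|ξ| → ∞ as |ξ| → ∞. -/

import Mathlib

open Set Filter MeasureTheory
open scoped Topology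

noncomputable section

/-- The homogenized integrand `W_hom(ξ) = inf_{h ∈ H} E[W̄(·, ξ + h)]`, where `H` is a
(weakly closed) subspace of mean-zero potential fields in `L¹(Ω)^{m×d}`, is a finite
convex function which is superlinear at infinity, under joint measurability of `W̄`,
a.s. convexity in the second variable and integrability of `sup_{‖η‖≤r} W̄(·,η)` and of
`sup_{‖η‖≤r} W̄*(·,η)` for all `r > 0`. -/
theorem stmt19 {Ω : Type*} [MeasurableSpace Ω] (μ : Measure Ω) [IsProbabilityMeasure μ]
    (m d : ℕ) (W : Ω → EuclideanSpace ℝ (Fin m × Fin d) → ℝ)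
    (hmeas : Measurable (Function.uncurry W))
    (h0 : ∀ ω ξ, 0 ≤ W ω ξ)
    (hconv : ∀ᵐ ω ∂μ, ConvexOn ℝ univ (W ω))
    (hWb : ∀ r : ℝ, 0 < r → ∃ S : Ω → ℝ, Integrable S μ ∧
      ∀ᵐ ω ∂μ, ∀ η : EuclideanSpace ℝ (Fin m × Fin d), ‖η‖ ≤ r → W ω η ≤ S ω)
    (hWconj : ∀ r : ℝ, 0 < r → ∃ S : Ω → ℝ, Integrable S μ ∧
      ∀ᵐ ω ∂μ, ∀ η ξ : EuclideanSpace ℝ (Fin m × Fin d),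
        ‖η‖ ≤ r → (inner ℝ η ξ : ℝ) - W ω ξ ≤ S ω)
    (H : Set (Ω → EuclideanSpace ℝ (Fin m × Fin d)))
    (hH0 : (fun _ => (0 : EuclideanSpace ℝ (Fin m × Fin d))) ∈ H)
    (hHsub : ∀ h₁ ∈ H, ∀ h₂ ∈ H, ∀ a b : ℝ,
      (fun ω => a • h₁ ω + b • h₂ ω) ∈ H)
    (hHmeanzero : ∀ h ∈ H, Integrable h μ ∧ ∫ ω, h ω ∂μ = 0)
    (Whom : EuclideanSpace ℝ (Fin m × Fin d) → ℝ)
    (hWhom : ∀ ξ, Whom ξ =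
      sInf {r : ℝ | ∃ h ∈ H, Integrable (fun ω => W ω (ξ + h ω)) μ ∧
        r = ∫ ω, W ω (ξ + h ω) ∂μ}) :
    ConvexOn ℝ univ Whom ∧
    (∀ ξ, Whom ξ ≤ ∫ ω, W ω ξ ∂μ) ∧
    (∀ C : ℝ, ∃ R : ℝ, ∀ ξ : EuclideanSpace ℝ (Fin m × Fin d),
      R ≤ ‖ξ‖ → C * ‖ξ‖ ≤ Whom ξ) := by
  classical
  -- a.e.-strong measurability of `ω ↦ W ω (ξ + h ω)`
  have hmeasW : ∀ (h : Ω → EuclideanSpace ℝ (Fin m × Fin d)), AEMeasurable h μ →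
      ∀ ξ, AEStronglyMeasurable (fun ω => W ω (ξ + h ω)) μ := by
    intro h hh ξ
    have h1 : AEMeasurable (fun ω => (ω, ξ + h ω)) μ :=
      aemeasurable_id.prodMk (aemeasurable_const.add hh)
    exact (hmeas.comp_aemeasurable h1).aestronglyMeasurable
  -- integrability of `ω ↦ W ω ξ`
  have hintW : ∀ ξ, Integrable (fun ω => W ω ξ) μ := by
    intro ξ
    obtain ⟨S, hSint, hSb⟩ := hWb (‖ξ‖ + 1) (by positivity)
    refine Integrable.mono' hSint
      ((hmeas.comp (measurable_id.prodMk measurable_const)).aestronglyMeasurable) ?_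
    filter_upwards [hSb] with ω hω
    rw [Real.norm_eq_abs, abs_of_nonneg (h0 _ _)]
    exact hω ξ (by linarith)
  -- nonemptiness of the admissible sets
  have hne : ∀ ξ, {r : ℝ | ∃ h ∈ H, Integrable (fun ω => W ω (ξ + h ω)) μ ∧
      r = ∫ ω, W ω (ξ + h ω) ∂μ}.Nonempty := by
    intro ξ
    exact ⟨∫ ω, W ω ξ ∂μ, (fun _ => 0), hH0, by simpa using hintW ξ, by simp⟩
  -- boundedness below
  have hbdd : ∀ ξ, BddBelow {r : ℝ | ∃ h ∈ H, Integrable (fun ω => W ω (ξ + h ω)) μ ∧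
      r = ∫ ω, W ω (ξ + h ω) ∂μ} := by
    intro ξ
    refine ⟨0, ?_⟩
    rintro r ⟨h, -, -, rfl⟩
    exact integral_nonneg fun ω => h0 _ _
  -- part 2
  have part2 : ∀ ξ, Whom ξ ≤ ∫ ω, W ω ξ ∂μ := by
    intro ξ
    rw [hWhom]
    exact csInf_le (hbdd ξ) ⟨(fun _ => 0), hH0, by simpa using hintW ξ, by simp⟩
  -- key superlinearity estimate via the conjugate bound
  have key : ∀ C : ℝ, 0 < C → ∃ K : ℝ, ∀ ξ, C * ‖ξ‖ - K ≤ Whom ξ := by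
    intro C hC
    obtain ⟨S, hSint, hSb⟩ := hWconj C hC
    refine ⟨∫ ω, S ω ∂μ, fun ξ => ?_⟩
    rw [hWhom]
    refine le_csInf (hne ξ) ?_
    rintro r ⟨h, hhH, hint, rfl⟩
    obtain ⟨hhint, hhmean⟩ := hHmeanzero h hhH
    set η : EuclideanSpace ℝ (Fin m × Fin d) :=
      if ξ = 0 then 0 else (C / ‖ξ‖) • ξ with hη
    have hηnorm : ‖η‖ ≤ C := by
      rw [hη]; split_ifs with hξ
      · simpa using hC.le
      · rw [norm_smul, Real.norm_eq_abs, abs_of_nonneg (div_nonneg hC.le (norm_nonneg _)),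
          div_mul_cancel₀]
        exact norm_ne_zero_iff.mpr hξ
    have hηinner : (inner ℝ η ξ : ℝ) = C * ‖ξ‖ := by
      rw [hη]; split_ifs with hξ
      · simp [hξ]
      · have hn : ‖ξ‖ ≠ 0 := norm_ne_zero_iff.mpr hξ
        rw [real_inner_smul_left, real_inner_self_eq_norm_mul_norm, div_mul_eq_mul_div,
          mul_div_assoc, mul_div_cancel_left₀ _ hn]
    have hint1 : Integrable (fun ω => (inner ℝ η (ξ + h ω) : ℝ)) μ := by
      have := (integrable_const (inner ℝ η ξ : ℝ)).add (hhint.const_inner η)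
      simpa [inner_add_right] using this
    have hI1 : ∫ ω, (inner ℝ η (ξ + h ω) : ℝ) ∂μ = C * ‖ξ‖ := by
      have h2 : ∫ ω, (inner ℝ η (h ω) : ℝ) ∂μ = 0 := by
        rw [integral_inner hhint, hhmean, inner_zero_right]
      calc ∫ ω, (inner ℝ η (ξ + h ω) : ℝ) ∂μ
          = ∫ ω, ((inner ℝ η ξ : ℝ) + inner ℝ η (h ω)) ∂μ := by
            simp [inner_add_right]
        _ = (inner ℝ η ξ : ℝ) + ∫ ω, (inner ℝ η (h ω) : ℝ) ∂μ := by
            rw [integral_add (integrable_const _) (hhint.const_inner η)]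
            simp
        _ = C * ‖ξ‖ := by rw [h2, hηinner, add_zero]
    have hmono : ∫ ω, ((inner ℝ η (ξ + h ω) : ℝ) - W ω (ξ + h ω)) ∂μ ≤ ∫ ω, S ω ∂μ := by
      refine integral_mono_ae (hint1.sub hint) hSint ?_
      filter_upwards [hSb] with ω hω
      exact hω η (ξ + h ω) hηnorm
    rw [integral_sub hint1 hint, hI1] at hmono
    linarith
  -- convexity
  have hconvex : ConvexOn ℝ univ Whom := by
    refine ⟨convex_univ, fun ξ₁ _ ξ₂ _ a b ha hb hab => ?_⟩
    simp only [smul_eq_mul]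
    refine le_of_forall_pos_le_add fun ε hε => ?_
    obtain ⟨r₁, hr₁mem, hr₁⟩ := Real.lt_sInf_add_pos (hne ξ₁) hε
    obtain ⟨r₂, hr₂mem, hr₂⟩ := Real.lt_sInf_add_pos (hne ξ₂) hε
    obtain ⟨h₁, hh₁H, hint₁, hr₁eq⟩ := hr₁mem
    obtain ⟨h₂, hh₂H, hint₂, hr₂eq⟩ := hr₂mem
    have hh₃H := hHsub h₁ hh₁H h₂ hh₂H a b
    have hint₁' := (hHmeanzero h₁ hh₁H).1
    have hint₂' := (hHmeanzero h₂ hh₂H).1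
    have hmeas₃ : AEStronglyMeasurable
        (fun ω => W ω (a • ξ₁ + b • ξ₂ + (a • h₁ ω + b • h₂ ω))) μ := by
      refine hmeasW _ ?_ _
      exact ((hint₁'.smul a).add (hint₂'.smul b)).aemeasurable
    have hbound : ∀ᵐ ω ∂μ, W ω (a • ξ₁ + b • ξ₂ + (a • h₁ ω + b • h₂ ω)) ≤
        a * W ω (ξ₁ + h₁ ω) + b * W ω (ξ₂ + h₂ ω) := by
      filter_upwards [hconv] with ω hω
      have h := hω.2 (mem_univ (ξ₁ + h₁ ω)) (mem_univ (ξ₂ + h₂ ω)) ha hb hab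
      simp only [smul_eq_mul] at h
      have e : a • ξ₁ + b • ξ₂ + (a • h₁ ω + b • h₂ ω) = a • (ξ₁ + h₁ ω) + b • (ξ₂ + h₂ ω) := by
        module
      rw [e]; exact h
    have hintmix : Integrable (fun ω => a * W ω (ξ₁ + h₁ ω) + b * W ω (ξ₂ + h₂ ω)) μ :=
      (hint₁.const_mul a).add (hint₂.const_mul b)
    have hint₃ : Integrable (fun ω => W ω (a • ξ₁ + b • ξ₂ + (a • h₁ ω + b • h₂ ω))) μ := by
      refine Integrable.mono' hintmix hmeas₃ ?_
      filter_upwards [hbound] with ω hω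
      rw [Real.norm_eq_abs, abs_of_nonneg (h0 _ _)]
      exact hω
    rw [hWhom]
    have hle1 : sInf {r : ℝ | ∃ h ∈ H,
        Integrable (fun ω => W ω (a • ξ₁ + b • ξ₂ + h ω)) μ ∧
        r = ∫ ω, W ω (a • ξ₁ + b • ξ₂ + h ω) ∂μ} ≤
        ∫ ω, W ω (a • ξ₁ + b • ξ₂ + (a • h₁ ω + b • h₂ ω)) ∂μ :=
      csInf_le (hbdd _) ⟨(fun ω => a • h₁ ω + b • h₂ ω), hh₃H, hint₃, rfl⟩
    have hle2 : ∫ ω, W ω (a • ξ₁ + b • ξ₂ + (a • h₁ ω + b • h₂ ω)) ∂μ ≤ a * r₁ + b * r₂ := by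
      calc ∫ ω, W ω (a • ξ₁ + b • ξ₂ + (a • h₁ ω + b • h₂ ω)) ∂μ
          ≤ ∫ ω, (a * W ω (ξ₁ + h₁ ω) + b * W ω (ξ₂ + h₂ ω)) ∂μ :=
            integral_mono_ae hint₃ hintmix hbound
        _ = a * ∫ ω, W ω (ξ₁ + h₁ ω) ∂μ + b * ∫ ω, W ω (ξ₂ + h₂ ω) ∂μ := by
            rw [integral_add (hint₁.const_mul a) (hint₂.const_mul b),
              integral_const_mul, integral_const_mul]
        _ = a * r₁ + b * r₂ := by rw [hr₁eq, hr₂eq]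
    have hw1 : Whom ξ₁ = sInf {r : ℝ | ∃ h ∈ H, Integrable (fun ω => W ω (ξ₁ + h ω)) μ ∧
        r = ∫ ω, W ω (ξ₁ + h ω) ∂μ} := hWhom ξ₁
    have hw2 : Whom ξ₂ = sInf {r : ℝ | ∃ h ∈ H, Integrable (fun ω => W ω (ξ₂ + h ω)) μ ∧
        r = ∫ ω, W ω (ξ₂ + h ω) ∂μ} := hWhom ξ₂
    rw [← hw1] at hr₁
    rw [← hw2] at hr₂
    nlinarith [hle1.trans hle2]
  refine ⟨hconvex, part2, fun C => ?_⟩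
  obtain ⟨K, hK⟩ := key (max C 0 + 1) (by positivity)
  refine ⟨max K 1, fun ξ hξ => ?_⟩
  have h1 := hK ξ
  nlinarith [le_max_left K 1, le_max_right K 1, norm_nonneg ξ,
    mul_nonneg (sub_nonneg.2 (le_max_left C 0)) (norm_nonneg ξ)]
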